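/- The map Y_{a,b}(x1,x2,y1,y2) = (y1 + (a−b)/(x1−y2), y2, x1, x2 + (a−b)/(x1−y2)) preserves the canonical symplectic/Poisson structure on K^4 with {x1,x2} = {y1,y2} = 1, {x_i,y_j} = 0: i.e., writing Y_{a,b}(x1,x2,y1,y2) = (u1,u2,v1,v2), the brackets satisfy {u1,u2} = {v1,v2} = 1 and {u_i, v_j} = 0 for all i, j, where brackets of functions are computed via the chain rule from the coordinate brackets. -/

import Mathlib

/-- The partial derivative of `F : ℝ^4 → ℝ` in the `i`-th coordinate direction. -/
noncomputable def pd (i : Fin 4) (F : (Fin 4 → ℝ) → ℝ) (p : Fin 4 → ℝ) : ℝ :=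
  fderiv ℝ F p (Pi.single i 1)

/-- The canonical Poisson bracket on functions of `(x1, x2, y1, y2)`
(coordinates `0,1,2,3`), with `{x1,x2} = {y1,y2} = 1` and mixed brackets zero. -/
noncomputable def pb (F G : (Fin 4 → ℝ) → ℝ) (p : Fin 4 → ℝ) : ℝ :=
  pd 0 F p * pd 1 G p - pd 1 F p * pd 0 G p +
  pd 2 F p * pd 3 G p - pd 3 F p * pd 2 G p

/-- The components of the Yang-Baxter map `Y_{a,b}` on `(x1,x2,y1,y2)`. -/
noncomputable def u1f (a b : ℝ) (p : Fin 4 → ℝ) : ℝ := p 2 + (a - b) / (p 0 - p 3)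
noncomputable def u2f (p : Fin 4 → ℝ) : ℝ := p 3
noncomputable def v1f (p : Fin 4 → ℝ) : ℝ := p 0
noncomputable def v2f (a b : ℝ) (p : Fin 4 → ℝ) : ℝ := p 1 + (a - b) / (p 0 - p 3)

open ContinuousLinearMap in
lemma hg_deriv (a b : ℝ) (p : Fin 4 → ℝ) (h : p 0 ≠ p 3) :
    HasFDerivAt (fun q : Fin 4 → ℝ => (a - b) / (q 0 - q 3))
      ((-(a - b) / (p 0 - p 3) ^ 2) •
        ((proj 0 : (Fin 4 → ℝ) →L[ℝ] ℝ) - proj 3)) p := by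
  have h1 : HasFDerivAt (fun q : Fin 4 → ℝ => q 0 - q 3)
      ((proj 0 : (Fin 4 → ℝ) →L[ℝ] ℝ) - proj 3) p :=
    ((proj 0 : (Fin 4 → ℝ) →L[ℝ] ℝ).hasFDerivAt).sub
      ((proj 3 : (Fin 4 → ℝ) →L[ℝ] ℝ).hasFDerivAt)
  have hne : p 0 - p 3 ≠ 0 := sub_ne_zero.mpr h
  have hg : HasDerivAt (fun t : ℝ => (a - b) / t)
      (-(a - b) / (p 0 - p 3) ^ 2) (p 0 - p 3) := by
    have := (hasDerivAt_inv hne).const_mul (a - b)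
    simp only [div_eq_mul_inv]
    exact this.congr_deriv (by ring)
  exact hg.comp_hasFDerivAt p h1

open ContinuousLinearMap in
lemma pd_u1f (a b : ℝ) (p : Fin 4 → ℝ) (h : p 0 ≠ p 3) (i : Fin 4) :
    pd i (u1f a b) p =
      (if i = 2 then (1:ℝ) else 0) +
      (-(a - b) / (p 0 - p 3) ^ 2) *
        ((if i = 0 then (1:ℝ) else 0) - (if i = 3 then (1:ℝ) else 0)) := by
  have hu : HasFDerivAt (u1f a b)
      ((proj 2 : (Fin 4 → ℝ) →L[ℝ] ℝ) +
        (-(a - b) / (p 0 - p 3) ^ 2) • ((proj 0 : (Fin 4 → ℝ) →L[ℝ] ℝ) - proj 3)) p :=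
    ((proj 2 : (Fin 4 → ℝ) →L[ℝ] ℝ).hasFDerivAt).add (hg_deriv a b p h)
  rw [pd, hu.fderiv]
  simp [Pi.single_apply, eq_comm]

open ContinuousLinearMap in
lemma pd_v2f (a b : ℝ) (p : Fin 4 → ℝ) (h : p 0 ≠ p 3) (i : Fin 4) :
    pd i (v2f a b) p =
      (if i = 1 then (1:ℝ) else 0) +
      (-(a - b) / (p 0 - p 3) ^ 2) *
        ((if i = 0 then (1:ℝ) else 0) - (if i = 3 then (1:ℝ) else 0)) := by
  have hu : HasFDerivAt (v2f a b)
      ((proj 1 : (Fin 4 → ℝ) →L[ℝ] ℝ) +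
        (-(a - b) / (p 0 - p 3) ^ 2) • ((proj 0 : (Fin 4 → ℝ) →L[ℝ] ℝ) - proj 3)) p :=
    ((proj 1 : (Fin 4 → ℝ) →L[ℝ] ℝ).hasFDerivAt).add (hg_deriv a b p h)
  rw [pd, hu.fderiv]
  simp [Pi.single_apply, eq_comm]

open ContinuousLinearMap in
lemma pd_u2f (p : Fin 4 → ℝ) (i : Fin 4) :
    pd i u2f p = (if i = 3 then (1:ℝ) else 0) := by
  have hu : HasFDerivAt u2f (proj 3 : (Fin 4 → ℝ) →L[ℝ] ℝ) p :=
    (proj 3 : (Fin 4 → ℝ) →L[ℝ] ℝ).hasFDerivAt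
  rw [pd, hu.fderiv]
  simp [Pi.single_apply, eq_comm]

open ContinuousLinearMap in
lemma pd_v1f (p : Fin 4 → ℝ) (i : Fin 4) :
    pd i v1f p = (if i = 0 then (1:ℝ) else 0) := by
  have hu : HasFDerivAt v1f (proj 0 : (Fin 4 → ℝ) →L[ℝ] ℝ) p :=
    (proj 0 : (Fin 4 → ℝ) →L[ℝ] ℝ).hasFDerivAt
  rw [pd, hu.fderiv]
  simp [Pi.single_apply, eq_comm]

/-- The map `Y_{a,b}` preserves the canonical Poisson structure on `K^4`:
`{u1,u2} = {v1,v2} = 1` and all the mixed brackets `{u_i, v_j}` vanish. -/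
theorem yblift_symplectic (a b : ℝ) (p : Fin 4 → ℝ) (h : p 0 ≠ p 3) :
    pb (u1f a b) u2f p = 1 ∧ pb v1f (v2f a b) p = 1 ∧
    pb (u1f a b) v1f p = 0 ∧ pb (u1f a b) (v2f a b) p = 0 ∧
    pb u2f v1f p = 0 ∧ pb u2f (v2f a b) p = 0 := by
  have hne : p 0 - p 3 ≠ 0 := sub_ne_zero.mpr h
  simp (config := { decide := true }) only [pb, pd_u1f a b p h, pd_v2f a b p h, pd_u2f, pd_v1f,
    if_true, if_false]
  norm_num
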